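/- Fix N ≥ 1 and let Ω = {0,1}^N. For p ∈ [0,1], let B_p be the Bernoulli measure on Ω given by B_p({ω}) = p^{+ω}(1−p)^{N−+ω}, where +ω is the number of 1s in ω. Then a function f : Ω → [0,∞] satisfies ∫ f dB_p ≤ 1 for every p ∈ [0,1] if and only if there exist g : Ω → [0,∞] and h : {0,…,N} → [0,∞] such that: (i) ∫ g dP ≤ 1 for every exchangeable probability measure P on Ω; (ii) Σ_{k=0}^N binom(N,k) p^k (1−p)^{N−k} h(k) ≤ 1 for every p ∈ [0,1]; (iii) for every p ∈ [0,1], f(ω) = g(ω)·h(+ω) for B_p-almost every ω. -/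

import Mathlib

open MeasureTheory
open scoped ENNReal

/-- `cnt ω` is the number of 1s (`true`s) in the binary sequence `ω`. -/
def cnt {N : ℕ} (ω : Fin N → Bool) : ℕ := (Finset.univ.filter fun i => ω i = true).card

/-- The Bernoulli measure `B_p` on `{0,1}^N`: `B_p({ω}) = p^{+ω} (1-p)^{N-+ω}`. -/
noncomputable def bern (N : ℕ) (p : ℝ≥0∞) : Measure (Fin N → Bool) :=
  ∑ ω : Fin N → Bool, (p ^ cnt ω * (1 - p) ^ (N - cnt ω)) • Measure.dirac ω

lemma meas_all {N : ℕ} (s : Set (Fin N → Bool)) : MeasurableSet s :=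
  s.toFinite.measurableSet

lemma meas_fn {N : ℕ} {β : Type*} [MeasurableSpace β] (f : (Fin N → Bool) → β) :
    Measurable f := measurable_of_countable f

lemma cnt_le {N : ℕ} (ω : Fin N → Bool) : cnt ω ≤ N := by
  simpa [cnt] using (Finset.card_filter_le Finset.univ _).trans (by simp)

lemma lintegral_bern {N : ℕ} (p : ℝ≥0∞) (f : (Fin N → Bool) → ℝ≥0∞) :
    ∫⁻ ω, f ω ∂(bern N p) = ∑ ω, p ^ cnt ω * (1 - p) ^ (N - cnt ω) * f ω := by
  rw [bern, lintegral_finset_sum_measure]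
  simp [lintegral_smul_measure, lintegral_dirac, mul_assoc]

lemma cnt_comp {N : ℕ} (ω : Fin N → Bool) (π : Equiv.Perm (Fin N)) :
    cnt (fun i => ω (π i)) = cnt ω := by
  unfold cnt
  apply Finset.card_bij (fun i _ => π i)
  · intro a ha; simp at ha ⊢; exact ha
  · intro a _ b _ hab; exact π.injective hab
  · intro b hb; exact ⟨π.symm b, by simp at hb ⊢; exact hb, by simp⟩

lemma exists_perm_of_cnt_eq {N : ℕ} (ω ω' : Fin N → Bool) (h : cnt ω = cnt ω') :
    ∃ π : Equiv.Perm (Fin N), ω' = fun i => ω (π i) := by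
  have hc : Fintype.card {i // ω' i = true} = Fintype.card {i // ω i = true} := by
    simp only [Fintype.card_subtype]
    exact h.symm
  have hc' : Fintype.card {i // ¬ ω' i = true} = Fintype.card {i // ¬ ω i = true} := by
    have h1 := Fintype.card_subtype_compl (fun i : Fin N => ω' i = true)
    have h2 := Fintype.card_subtype_compl (fun i : Fin N => ω i = true)
    rw [h1, h2, hc]
  obtain ⟨e1⟩ := Fintype.card_eq.mp hc
  obtain ⟨e2⟩ := Fintype.card_eq.mp hc'
  classical
  refine ⟨Equiv.subtypeCongr e1 e2, ?_⟩
  funext i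
  by_cases hi : ω' i = true
  · rw [Equiv.subtypeCongr, Equiv.trans_apply,
      Equiv.sumCompl_symm_apply_of_pos (p := fun x => ω' x = true) hi]
    simp only [Equiv.trans_apply, Equiv.sumCongr_apply, Sum.map_inl, Equiv.sumCompl_apply_inl]
    exact hi.trans (e1 ⟨i, hi⟩).2.symm
  · rw [Equiv.subtypeCongr, Equiv.trans_apply,
      Equiv.sumCompl_symm_apply_of_neg (p := fun x => ω' x = true) hi]
    simp only [Equiv.trans_apply, Equiv.sumCongr_apply, Sum.map_inr, Equiv.sumCompl_apply_inr]
    have := (e2 ⟨i, hi⟩).2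
    simp only [Bool.not_eq_true] at this hi ⊢
    rw [this, hi]

lemma card_fiber {N : ℕ} (k : ℕ) :
    (Finset.univ.filter fun ω : Fin N → Bool => cnt ω = k).card = N.choose k := by
  classical
  have hpc : ((Finset.univ : Finset (Fin N)).powersetCard k).card = N.choose k := by
    rw [Finset.card_powersetCard, Finset.card_univ, Fintype.card_fin]
  rw [← hpc]
  refine Finset.card_bij' (fun ω _ => Finset.univ.filter fun i => ω i = true)
      (fun s _ => fun i => decide (i ∈ s)) ?_ ?_ ?_ ?_
  · intro ω hω; simp at hω; simp [Finset.mem_powersetCard, cnt] at *; exact hω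
  · intro s hs; simp [Finset.mem_powersetCard] at hs; simp only [Finset.mem_filter, Finset.mem_univ, true_and]; unfold cnt
    convert hs using 2
    ext i; simp
  · intro ω _; funext i; simp
  · intro s _; ext i; simp

lemma cnt_rep {N k : ℕ} (hk : k ≤ N) : cnt (fun i : Fin N => decide (i.val < k)) = k := by
  unfold cnt
  simp only [decide_eq_true_eq]
  rw [← Finset.card_range k]
  apply Finset.card_bij (fun i _ => i.val)
  · intro a ha; simp at ha ⊢; exact ha
  · intro a _ b _ hab; exact Fin.val_injective hab
  · intro b hb; simp at hb
    exact ⟨⟨b, lt_of_lt_of_le hb hk⟩, by simp [hb], rfl⟩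

lemma exch_const {N : ℕ} (P : Measure (Fin N → Bool))
    (hP : ∀ π : Equiv.Perm (Fin N), P.map (fun ω i => ω (π i)) = P)
    (ω ω' : Fin N → Bool) (σ : Equiv.Perm (Fin N)) (hσ : ω' = fun i => ω (σ i)) :
    P {ω'} = P {ω} := by
  have hmap := hP σ.symm
  have hpre : (fun (ω'' : Fin N → Bool) i => ω'' (σ.symm i)) ⁻¹' {ω} = {ω'} := by
    ext ω''
    simp only [Set.mem_preimage, Set.mem_singleton_iff, hσ]
    constructor
    · intro he; funext i
      have := congrFun he (σ i); simpa using this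
    · intro he; funext i; rw [he]; simp
  calc P {ω'} = P ((fun (ω'' : Fin N → Bool) i => ω'' (σ.symm i)) ⁻¹' {ω}) := by rw [hpre]
    _ = (P.map (fun ω'' i => ω'' (σ.symm i))) {ω} :=
        (Measure.map_apply (meas_fn _) (meas_all _)).symm
    _ = P {ω} := by rw [hmap]

noncomputable def orbitM (N k : ℕ) : Measure (Fin N → Bool) :=
  ((N.choose k : ℝ≥0∞))⁻¹ • ∑ ω ∈ Finset.univ.filter (fun ω => cnt ω = k), Measure.dirac ω

lemma orbitM_prob {N k : ℕ} (hk : k ≤ N) : IsProbabilityMeasure (orbitM N k) := by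
  constructor
  rw [orbitM, Measure.smul_apply, Measure.finset_sum_apply]
  have hC0 : (N.choose k : ℝ≥0∞) ≠ 0 := by
    exact Nat.cast_ne_zero.mpr (Nat.choose_pos hk).ne'
  simp only [measure_univ, Finset.sum_const, card_fiber, nsmul_eq_mul, mul_one, smul_eq_mul]
  exact ENNReal.inv_mul_cancel hC0 (ENNReal.natCast_ne_top _)

lemma orbitM_exch {N k : ℕ} (π : Equiv.Perm (Fin N)) :
    (orbitM N k).map (fun ω i => ω (π i)) = orbitM N k := by
  ext s hs
  rw [Measure.map_apply (meas_fn _) hs]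
  rw [orbitM, Measure.smul_apply, Measure.smul_apply, Measure.finset_sum_apply,
    Measure.finset_sum_apply]
  congr 1
  have hpre : MeasurableSet ((fun (ω : Fin N → Bool) i => ω (π i)) ⁻¹' s) := meas_all _
  simp only [Measure.dirac_apply' _ hpre, Measure.dirac_apply' _ hs]
  refine Finset.sum_nbij' (fun ω => fun i => ω (π i)) (fun ω => fun i => ω (π.symm i))
    ?_ ?_ ?_ ?_ ?_
  · intro ω hω; simp only [Finset.mem_filter, Finset.mem_univ, true_and] at hω ⊢
    rw [cnt_comp]; exact hω
  · intro ω hω; simp only [Finset.mem_filter, Finset.mem_univ, true_and] at hω ⊢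
    rw [cnt_comp]; exact hω
  · intro ω _; funext i; simp
  · intro ω _; funext i; simp
  · intro ω hω
    classical
    by_cases hm : (fun i => ω (π i)) ∈ s <;>
      simp [Set.indicator_apply, Set.mem_preimage, hm]

lemma lintegral_orbitM {N k : ℕ} (g : (Fin N → Bool) → ℝ≥0∞) :
    ∫⁻ ω, g ω ∂(orbitM N k) =
      ((N.choose k : ℝ≥0∞))⁻¹ * ∑ ω ∈ Finset.univ.filter (fun ω => cnt ω = k), g ω := by
  rw [orbitM, lintegral_smul_measure, lintegral_finset_sum_measure]
  simp [lintegral_dirac]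

theorem stmt15 (N : ℕ) (hN : 1 ≤ N) (f : (Fin N → Bool) → ℝ≥0∞) :
    (∀ p : ℝ≥0∞, p ≤ 1 → ∫⁻ ω, f ω ∂(bern N p) ≤ 1) ↔
    (∃ g : (Fin N → Bool) → ℝ≥0∞, ∃ h : ℕ → ℝ≥0∞,
      (∀ (P : Measure (Fin N → Bool)) [IsProbabilityMeasure P],
        (∀ π : Equiv.Perm (Fin N), P.map (fun ω i => ω (π i)) = P) →
        ∫⁻ ω, g ω ∂P ≤ 1) ∧
      (∀ p : ℝ≥0∞, p ≤ 1 →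
        ∑ k ∈ Finset.range (N + 1),
          (N.choose k : ℝ≥0∞) * p ^ k * (1 - p) ^ (N - k) * h k ≤ 1) ∧
      (∀ p : ℝ≥0∞, p ≤ 1 → ∀ᵐ ω ∂(bern N p), f ω = g ω * h (cnt ω))) := by
  classical
  have hfib : ∀ ω : Fin N → Bool, cnt ω ∈ Finset.range (N + 1) := fun ω =>
    Finset.mem_range.mpr (Nat.lt_succ_of_le (cnt_le ω))
  have hC0 : ∀ k ≤ N, (N.choose k : ℝ≥0∞) ≠ 0 := fun k hk =>
    Nat.cast_ne_zero.mpr (Nat.choose_pos hk).ne'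
  have hCt : ∀ k : ℕ, (N.choose k : ℝ≥0∞) ≠ ∞ := fun k => ENNReal.natCast_ne_top _
  constructor
  · intro hf
    have hfin : ∀ ω, f ω ≠ ∞ := by
      intro ω hω
      have h2 := hf 2⁻¹ (ENNReal.inv_le_one.mpr one_le_two)
      rw [lintegral_bern] at h2
      have hterm : (2⁻¹ : ℝ≥0∞) ^ cnt ω * (1 - 2⁻¹) ^ (N - cnt ω) * f ω ≤ 1 :=
        le_trans (Finset.single_le_sum
          (f := fun ω' : Fin N → Bool => (2⁻¹ : ℝ≥0∞) ^ cnt ω' * (1 - 2⁻¹) ^ (N - cnt ω') * f ω')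
          (fun _ _ => zero_le) (Finset.mem_univ ω)) h2
      rw [ENNReal.one_sub_inv_two, hω] at hterm
      have hc0 : (2⁻¹ : ℝ≥0∞) ^ cnt ω * (2⁻¹ : ℝ≥0∞) ^ (N - cnt ω) ≠ 0 :=
        mul_ne_zero (pow_ne_zero _ (by simp)) (pow_ne_zero _ (by simp))
      rw [ENNReal.mul_top hc0] at hterm
      simp at hterm
    set S : ℕ → ℝ≥0∞ := fun k => ∑ ω ∈ Finset.univ.filter (fun ω' => cnt ω' = k), f ω
      with hSdef
    have hSfin : ∀ k, S k ≠ ∞ := by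
      intro k
      rw [hSdef]
      exact (ENNReal.sum_lt_top.mpr fun ω _ => (hfin ω).lt_top).ne
    set h : ℕ → ℝ≥0∞ := fun k => S k / (N.choose k : ℝ≥0∞) with hhdef
    set g : (Fin N → Bool) → ℝ≥0∞ := fun ω => f ω / h (cnt ω) with hgdef
    have hCh : ∀ k, k ≤ N → (N.choose k : ℝ≥0∞) * h k = S k := fun k hk =>
      ENNReal.mul_div_cancel (hC0 k hk) (hCt k)
    have hhtop : ∀ k, k ≤ N → h k ≠ ∞ := fun k hk =>
      (ENNReal.div_lt_top (hSfin k) (hC0 k hk)).ne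
    have hSh : ∀ k, k ≤ N → S k / h k ≤ (N.choose k : ℝ≥0∞) := by
      intro k hk
      rcases eq_or_ne (S k) 0 with h0 | h0
      · simp [hhdef, h0]
      · have hhne : h k ≠ 0 := by
          rw [hhdef]
          simp only [ne_eq, ENNReal.div_eq_zero_iff, not_or]
          exact ⟨h0, hCt k⟩
        have hmul : h k * (N.choose k : ℝ≥0∞) = S k := by
          rw [mul_comm]; exact hCh k hk
        have heq := (ENNReal.eq_div_iff hhne (hhtop k hk)).mpr hmul
        rw [← heq]
    refine ⟨g, h, ?_, ?_, ?_⟩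
    · -- (i) g is an e-variable for every exchangeable P
      intro P _ hP
      rw [lintegral_fintype]
      have h1 : ∑ ω : Fin N → Bool, P {ω} = 1 := by
        have h2 := lintegral_fintype (μ := P) (f := fun _ : Fin N → Bool => (1 : ℝ≥0∞))
        simp only [lintegral_one, measure_univ, one_mul] at h2
        exact h2.symm
      rw [← Finset.sum_fiberwise_of_maps_to (g := cnt) (fun ω _ => hfib ω)
        (fun ω => g ω * P {ω})]
      calc ∑ k ∈ Finset.range (N + 1),
            ∑ ω ∈ Finset.univ.filter (fun ω : Fin N → Bool => cnt ω = k), g ω * P {ω}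
          ≤ ∑ k ∈ Finset.range (N + 1),
            ∑ ω ∈ Finset.univ.filter (fun ω : Fin N → Bool => cnt ω = k), P {ω} := ?_
        _ = ∑ ω : Fin N → Bool, P {ω} :=
            Finset.sum_fiberwise_of_maps_to (fun ω _ => hfib ω) _
        _ = 1 := h1
      apply Finset.sum_le_sum
      intro k hk
      have hkN : k ≤ N := Nat.lt_succ_iff.mp (Finset.mem_range.mp hk)
      set rep : Fin N → Bool := fun i => decide (i.val < k) with hrep
      have hcntrep : cnt rep = k := cnt_rep hkN
      have hconst : ∀ ω ∈ Finset.univ.filter (fun ω : Fin N → Bool => cnt ω = k),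
          P {ω} = P {rep} := by
        intro ω hω
        have hωk : cnt ω = k := (Finset.mem_filter.mp hω).2
        obtain ⟨σ, hσ⟩ := exists_perm_of_cnt_eq ω rep (by rw [hωk, hcntrep])
        exact (exch_const P hP ω rep σ hσ).symm
      have hGsum : ∑ ω ∈ Finset.univ.filter (fun ω : Fin N → Bool => cnt ω = k), g ω
          = S k / h k := by
        calc ∑ ω ∈ Finset.univ.filter (fun ω : Fin N → Bool => cnt ω = k), g ω
            = ∑ ω ∈ Finset.univ.filter (fun ω : Fin N → Bool => cnt ω = k),
              f ω * (h k)⁻¹ := by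
              apply Finset.sum_congr rfl
              intro ω hω
              simp only [hgdef]
              rw [(Finset.mem_filter.mp hω).2, div_eq_mul_inv]
          _ = (∑ ω ∈ Finset.univ.filter (fun ω : Fin N → Bool => cnt ω = k), f ω) *
              (h k)⁻¹ := (Finset.sum_mul _ _ _).symm
          _ = S k / h k := by simp only [hSdef, div_eq_mul_inv]
      calc ∑ ω ∈ Finset.univ.filter (fun ω : Fin N → Bool => cnt ω = k), g ω * P {ω}
          = ∑ ω ∈ Finset.univ.filter (fun ω : Fin N → Bool => cnt ω = k), g ω * P {rep} :=
            Finset.sum_congr rfl (fun ω hω => by rw [hconst ω hω])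
        _ = (∑ ω ∈ Finset.univ.filter (fun ω : Fin N → Bool => cnt ω = k), g ω) * P {rep} :=
            by rw [Finset.sum_mul]
        _ = (S k / h k) * P {rep} := by rw [hGsum]
        _ ≤ (N.choose k : ℝ≥0∞) * P {rep} := mul_le_mul_left (hSh k hkN) _
        _ = ∑ ω ∈ Finset.univ.filter (fun ω : Fin N → Bool => cnt ω = k), P {rep} := by
            rw [Finset.sum_const, card_fiber, nsmul_eq_mul]
        _ = ∑ ω ∈ Finset.univ.filter (fun ω : Fin N → Bool => cnt ω = k), P {ω} :=
            Finset.sum_congr rfl (fun ω hω => (hconst ω hω).symm)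
    · -- (ii) h is an e-function for every binomial measure
      intro p hp
      have hb := hf p hp
      rw [lintegral_bern, ← Finset.sum_fiberwise_of_maps_to (g := cnt) (fun ω _ => hfib ω)
        (fun ω => p ^ cnt ω * (1 - p) ^ (N - cnt ω) * f ω)] at hb
      refine le_trans (le_of_eq ?_) hb
      apply Finset.sum_congr rfl
      intro k hk
      have hkN : k ≤ N := Nat.lt_succ_iff.mp (Finset.mem_range.mp hk)
      have hsum : ∑ ω ∈ Finset.univ.filter (fun ω : Fin N → Bool => cnt ω = k),
          p ^ cnt ω * (1 - p) ^ (N - cnt ω) * f ω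
          = p ^ k * (1 - p) ^ (N - k) * S k := by
        simp only [hSdef]
        rw [Finset.mul_sum]
        apply Finset.sum_congr rfl
        intro ω hω
        rw [(Finset.mem_filter.mp hω).2]
      rw [hsum, ← hCh k hkN]
      ring
    · -- (iii) f = g · h ∘ cnt a.e.
      intro p hp
      refine Filter.Eventually.of_forall ?_
      intro ω
      rcases eq_or_ne (h (cnt ω)) 0 with h0 | h0
      · have hS0 : S (cnt ω) = 0 := by
          have h0' := h0
          rw [hhdef] at h0'
          simp only [ENNReal.div_eq_zero_iff] at h0'
          rcases h0' with h' | h'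
          · exact h'
          · exact absurd h' (hCt _)
        have hf0 : f ω = 0 := by
          rw [hSdef] at hS0
          exact (Finset.sum_eq_zero_iff.mp hS0) ω (by simp)
        simp [hgdef, hf0, h0]
      · rw [hgdef]
        simp only
        rw [ENNReal.div_mul_cancel h0 (hhtop _ (cnt_le ω))]
  · rintro ⟨g, h, hg, hh2, hae⟩ p hp
    rw [lintegral_congr_ae (hae p hp), lintegral_bern,
      ← Finset.sum_fiberwise_of_maps_to (g := cnt) (fun ω _ => hfib ω)
        (fun ω => p ^ cnt ω * (1 - p) ^ (N - cnt ω) * (g ω * h (cnt ω)))]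
    refine le_trans (Finset.sum_le_sum ?_) (hh2 p hp)
    intro k hk
    have hkN : k ≤ N := Nat.lt_succ_iff.mp (Finset.mem_range.mp hk)
    have horb : ∑ ω ∈ Finset.univ.filter (fun ω : Fin N → Bool => cnt ω = k), g ω
        ≤ (N.choose k : ℝ≥0∞) := by
      haveI := orbitM_prob (N := N) hkN
      have hint := hg (orbitM N k) (fun π => orbitM_exch π)
      rw [lintegral_orbitM] at hint
      calc ∑ ω ∈ Finset.univ.filter (fun ω : Fin N → Bool => cnt ω = k), g ω
          = (N.choose k : ℝ≥0∞) * (((N.choose k : ℝ≥0∞))⁻¹ *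
            ∑ ω ∈ Finset.univ.filter (fun ω : Fin N → Bool => cnt ω = k), g ω) := by
            rw [← mul_assoc, ENNReal.mul_inv_cancel (hC0 k hkN) (hCt k), one_mul]
        _ ≤ (N.choose k : ℝ≥0∞) * 1 := mul_le_mul_right hint _
        _ = (N.choose k : ℝ≥0∞) := mul_one _
    calc ∑ ω ∈ Finset.univ.filter (fun ω : Fin N → Bool => cnt ω = k),
          p ^ cnt ω * (1 - p) ^ (N - cnt ω) * (g ω * h (cnt ω))
        = ∑ ω ∈ Finset.univ.filter (fun ω : Fin N → Bool => cnt ω = k),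
          (p ^ k * (1 - p) ^ (N - k) * h k) * g ω := by
          apply Finset.sum_congr rfl
          intro ω hω
          rw [(Finset.mem_filter.mp hω).2]
          ring
      _ = (p ^ k * (1 - p) ^ (N - k) * h k) *
          ∑ ω ∈ Finset.univ.filter (fun ω : Fin N → Bool => cnt ω = k), g ω :=
          (Finset.mul_sum _ _ _).symm
      _ ≤ (p ^ k * (1 - p) ^ (N - k) * h k) * (N.choose k : ℝ≥0∞) :=
          mul_le_mul_right horb _
      _ = (N.choose k : ℝ≥0∞) * p ^ k * (1 - p) ^ (N - k) * h k := by ring
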